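/- arXiv:2502.00086 — 3 statements merged into one kernel-verified Lean document; each statement's English description precedes it below -/
import Mathlib

section
/- Let X be a complete metric space and μ a compactly supported probability measure on Lipschitz self-maps of X with χ_μ < 0 and E_{g∼μ}[ρ(g)^t] < ∞ for all t ∈ ℝ, with unique stationary measure ν. Then there exists α = α(μ) > 0 such that for all R > 0 and all x ∈ X: ν({y ∈ X : d(x,y) ≥ R}) ≪_{μ,x} R^{−α}. -/
open MeasureTheory ProbabilityTheory Filter Real
open Topology

noncomputable def lipConst {X : Type*} [MetricSpace X] (g : X → X) : ℝ :=
  sInf {ρ : ℝ | 0 < ρ ∧ ∀ x y : X, dist (g x) (g y) ≤ ρ * dist x y}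

/-- `ν` is `μ`-stationary: `μ * ν = ν`. -/
def IsStationaryMeasure {X : Type*} [MetricSpace X] [MeasurableSpace X]
    [MeasurableSpace (X → X)] (μ : Measure (X → X)) (ν : Measure X) : Prop :=
  ∀ f : BoundedContinuousFunction X ℝ,
    ∫ g, ∫ x, f (g x) ∂ν ∂μ = ∫ x, f x ∂ν

lemma lipConst_nonneg {X : Type*} [MetricSpace X] (g : X → X) : 0 ≤ lipConst g :=
  Real.sInf_nonneg fun _ hρ => hρ.1.le

lemma dist_le_lipConst {X : Type*} [MetricSpace X] {g : X → X}
    (h : ∃ K : NNReal, LipschitzWith K g) (a b : X) :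
    dist (g a) (g b) ≤ lipConst g * dist a b := by
  obtain ⟨K, hK⟩ := h
  have hne : ((K : ℝ) + 1) ∈ {ρ : ℝ | 0 < ρ ∧ ∀ x y : X, dist (g x) (g y) ≤ ρ * dist x y} := by
    refine ⟨by positivity, fun x y => ?_⟩
    calc dist (g x) (g y) ≤ K * dist x y := hK.dist_le_mul x y
    _ ≤ (K + 1) * dist x y := by nlinarith [dist_nonneg (x := x) (y := y)]
  rcases eq_or_lt_of_le (dist_nonneg (x := a) (y := b)) with hd | hd
  · have : a = b := dist_eq_zero.1 hd.symm
    simp [this, mul_comm, ← hd, lipConst_nonneg g]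
  · rw [← div_le_iff₀ hd] at *
    exact le_csInf ⟨_, hne⟩ fun ρ hρ => (div_le_iff₀ hd).2 (hρ.2 a b)

lemma real_rpow_add_le {u v α : ℝ} (hu : 0 ≤ u) (hv : 0 ≤ v) (h0 : 0 ≤ α) (h1 : α ≤ 1) :
    (u + v) ^ α ≤ u ^ α + v ^ α := by
  have h := NNReal.rpow_add_le_add_rpow u.toNNReal v.toNNReal h0 h1
  have := NNReal.coe_le_coe.2 h
  push_cast [NNReal.coe_rpow, Real.coe_toNNReal _ hu, Real.coe_toNNReal _ hv] at this
  exact this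

lemma abs_rpow_sub_one_le {y a : ℝ} (hy : 0 < y) (ha : 0 < a) (ha1 : a ≤ 1) :
    |y ^ a - 1| ≤ a * (y * y + 1 / y) := by
  rcases le_or_gt 1 y with h1 | h1
  · have hlog : 0 ≤ Real.log y := Real.log_nonneg h1
    have hya : y ^ a - 1 ≥ 0 := by
      have : (1:ℝ) = 1 ^ a := (Real.one_rpow a).symm
      nlinarith [Real.rpow_le_rpow (by norm_num : (0:ℝ) ≤ 1) h1 ha.le]
    rw [abs_of_nonneg hya]
    have hexp : y ^ a = Real.exp (a * Real.log y) := by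
      rw [Real.rpow_def_of_pos hy, mul_comm]
    -- e^t - 1 ≤ t e^t for t ≥ 0
    have ht : 0 ≤ a * Real.log y := by positivity
    have key : Real.exp (a * Real.log y) - 1 ≤ (a * Real.log y) * Real.exp (a * Real.log y) := by
      have h2 := Real.add_one_le_exp (-(a * Real.log y))
      have h3 := Real.exp_pos (a * Real.log y)
      have h4 : Real.exp (-(a * Real.log y)) * Real.exp (a * Real.log y) = 1 := by
        rw [← Real.exp_add]; simp
      nlinarith
    have hya_le : y ^ a ≤ y := by
      calc y ^ a ≤ y ^ (1:ℝ) := Real.rpow_le_rpow_of_exponent_le h1 ha1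
      _ = y := Real.rpow_one y
    have hlogy : Real.log y ≤ y := (Real.log_le_sub_one_of_pos hy).trans (by linarith)
    have hpow_nonneg : 0 ≤ y ^ a := Real.rpow_nonneg hy.le a
    calc y ^ a - 1 ≤ (a * Real.log y) * y ^ a := by rw [hexp]; linarith [key]
    _ ≤ a * (y * y) := by
        nlinarith [mul_le_mul hlogy hya_le hpow_nonneg (by linarith : (0:ℝ) ≤ y)]
    _ ≤ a * (y * y + 1/y) := by
        have : 0 < 1/y := by positivity
        nlinarith
  · have hya : y ^ a ≤ 1 := Real.rpow_le_one hy.le h1.le ha.le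
    rw [abs_of_nonpos (by linarith)]
    have hexp : y ^ a = Real.exp (a * Real.log y) := by
      rw [Real.rpow_def_of_pos hy, mul_comm]
    have h2 := Real.add_one_le_exp (a * Real.log y)
    have hlog : -Real.log y ≤ 1/y - 1 := by
      have := Real.log_le_sub_one_of_pos (show (0:ℝ) < 1/y by positivity)
      rwa [Real.log_div one_ne_zero (ne_of_gt hy), Real.log_one, zero_sub] at this
    have : -(y ^ a - 1) ≤ -(a * Real.log y) := by rw [hexp]; linarith
    have hy1 : 0 < 1/y := by positivity
    calc -(y ^ a - 1) ≤ a * (-Real.log y) := by linarith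
    _ ≤ a * (1/y - 1) := by nlinarith
    _ ≤ a * (y * y + 1/y) := by nlinarith

lemma tendsto_rpow_slope {y : ℝ} (hy : 0 < y) :
    Tendsto (fun n : ℕ => (y ^ ((n:ℝ)+1)⁻¹ - 1) / ((n:ℝ)+1)⁻¹) atTop (𝓝 (Real.log y)) := by
  have hd : HasDerivAt (fun t : ℝ => y ^ t) (Real.log y) 0 := by
    have h1 : HasDerivAt (fun t : ℝ => Real.exp (t * Real.log y)) (Real.log y) 0 := by
      have h2 : HasDerivAt (fun t : ℝ => t * Real.log y) (Real.log y) 0 :=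
        (hasDerivAt_id 0).mul_const _ |>.congr_deriv (by ring)
      simpa using h2.exp
    refine h1.congr_of_eventuallyEq (Eventually.of_forall fun t => ?_)
    simp [Real.rpow_def_of_pos hy, mul_comm]
  have hslope := hasDerivAt_iff_tendsto_slope.1 hd
  have hseq : Tendsto (fun n : ℕ => ((n:ℝ)+1)⁻¹) atTop (𝓝[≠] (0:ℝ)) := by
    refine tendsto_nhdsWithin_of_tendsto_nhds_of_eventually_within _ ?_ ?_
    · simpa [one_div] using tendsto_one_div_add_atTop_nhds_zero_nat (𝕜 := ℝ)
    · exact Eventually.of_forall fun n => by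
        simp [Set.mem_compl_singleton_iff]; positivity
  have := hslope.comp hseq
  refine this.congr fun n => ?_
  simp [Function.comp, slope_def_field]

lemma abs_log_le {y : ℝ} (hy : 0 ≤ y) : |Real.log y| ≤ y + y⁻¹ := by
  rcases eq_or_lt_of_le hy with h | h
  · simp [← h]
  rcases le_or_gt 1 y with h1 | h1
  · rw [abs_of_nonneg (Real.log_nonneg h1)]
    have := Real.log_le_sub_one_of_pos h
    have : 0 < y⁻¹ := by positivity
    linarith [Real.log_le_sub_one_of_pos h]
  · rw [abs_of_nonpos (Real.log_nonpos hy h1.le)]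
    have h2 := Real.log_le_sub_one_of_pos (show (0:ℝ) < y⁻¹ by positivity)
    rw [Real.log_inv] at h2
    linarith

lemma exists_bcf {X : Type*} [MetricSpace X] (x : X) (s M α : ℝ) (hM : 0 ≤ M) (hα0 : 0 < α) :
    ∃ f : BoundedContinuousFunction X ℝ,
      (∀ y, f y = min (|s| * dist x y) M ^ α) ∧ (∀ y, 0 ≤ f y) ∧ (∀ y, f y ≤ M ^ α) := by
  have hcont : Continuous fun y : X => min (|s| * dist x y) M ^ α :=
    (Real.continuous_rpow_const hα0.le).comp
      ((continuous_const.mul (continuous_const.dist continuous_id)).min continuous_const)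
  have hb : ∀ y : X, 0 ≤ min (|s| * dist x y) M ∧ min (|s| * dist x y) M ≤ M := fun y =>
    ⟨le_min (by positivity) hM, min_le_right _ _⟩
  have h0 : ∀ y : X, 0 ≤ min (|s| * dist x y) M ^ α := fun y => Real.rpow_nonneg (hb y).1 _
  have hub : ∀ y : X, min (|s| * dist x y) M ^ α ≤ M ^ α := fun y =>
    Real.rpow_le_rpow (hb y).1 (hb y).2 hα0.le
  refine ⟨BoundedContinuousFunction.ofNormedAddCommGroup _ hcont (M ^ α)
    (fun y => ?_), fun y => rfl, h0, hub⟩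
  rw [Real.norm_eq_abs, abs_of_nonneg (h0 y)]
  exact hub y

lemma exists_alpha {Ω : Type*} [MeasurableSpace Ω] (P : Measure Ω) [IsProbabilityMeasure P]
    (L' : Ω → ℝ) (hmeas : StronglyMeasurable L') (hnn : ∀ ω, 0 ≤ L' ω)
    (hInt : ∀ t : ℝ, Integrable (fun ω => L' ω ^ t) P)
    (hchi : ∫ ω, Real.log (L' ω) ∂P < 0) :
    ∃ α : ℝ, 0 < α ∧ α ≤ 1 ∧ ∫ ω, L' ω ^ α ∂P < 1 := by
  have hIntL : Integrable L' P := by simpa using hInt 1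
  have hIntinv : Integrable (fun ω => (L' ω)⁻¹) P := by
    have := hInt (-1); simpa [Real.rpow_neg_one] using this
  have hlogint : Integrable (fun ω => Real.log (L' ω)) P := by
    refine Integrable.mono' (hIntL.add hIntinv)
      ((Real.measurable_log.comp hmeas.measurable).aestronglyMeasurable) ?_
    exact Eventually.of_forall fun ω => by
      simpa [Real.norm_eq_abs] using abs_log_le (hnn ω)
  -- Step 1: find δ = (m+1)⁻¹ with ∫ log (max L' δ) < 0
  have hGm : ∃ m : ℕ, ∫ ω, max (Real.log (L' ω)) (-Real.log ((m:ℝ)+1)) ∂P < 0 := by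
    set G : ℕ → Ω → ℝ := fun m ω => max (Real.log (L' ω)) (-Real.log ((m:ℝ)+1)) with hG
    have habs : ∀ m ω, |G m ω| ≤ |Real.log (L' ω)| := by
      intro m ω
      have hlm : 0 ≤ Real.log ((m:ℝ)+1) := Real.log_nonneg (by push_cast; linarith)
      rw [abs_le]
      constructor
      · exact le_trans (neg_abs_le _) (le_max_left _ _)
      · exact max_le (le_abs_self _) (by linarith [abs_nonneg (Real.log (L' ω))])
    have hlim : ∀ ω, Tendsto (fun m : ℕ => G m ω) atTop (𝓝 (Real.log (L' ω))) := by
      intro ω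
      have h1 : Tendsto (fun m : ℕ => Real.log ((m:ℝ)+1)) atTop atTop :=
        Real.tendsto_log_atTop.comp
          (tendsto_atTop_add_const_right _ 1 tendsto_natCast_atTop_atTop)
      have h2 : ∀ᶠ m : ℕ in atTop, -Real.log ((m:ℝ)+1) ≤ Real.log (L' ω) := by
        have := h1.eventually_ge_atTop (-Real.log (L' ω))
        filter_upwards [this] with m hm; linarith
      refine tendsto_const_nhds.congr' ?_
      filter_upwards [h2] with m hm
      simp [hG, max_eq_left hm]
    have hTend : Tendsto (fun m : ℕ => ∫ ω, G m ω ∂P) atTop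
        (𝓝 (∫ ω, Real.log (L' ω) ∂P)) := by
      refine tendsto_integral_of_dominated_convergence (fun ω => |Real.log (L' ω)|)
        (fun m => ?_) hlogint.abs (fun m => Eventually.of_forall fun ω => ?_)
        (Eventually.of_forall hlim)
      · exact ((Real.measurable_log.comp hmeas.measurable).max measurable_const).aestronglyMeasurable
      · simpa [Real.norm_eq_abs] using habs m ω
    exact (hTend.eventually_lt_const hchi).exists
  obtain ⟨m, hm⟩ := hGm
  set δ : ℝ := ((m:ℝ)+1)⁻¹ with hδ
  have hδpos : 0 < δ := by positivity
  set M : Ω → ℝ := fun ω => max (L' ω) δ with hMdef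
  have hMpos : ∀ ω, 0 < M ω := fun ω => lt_of_lt_of_le hδpos (le_max_right _ _)
  have hMge : ∀ ω, δ ≤ M ω := fun ω => le_max_right _ _
  have hMgeL : ∀ ω, L' ω ≤ M ω := fun ω => le_max_left _ _
  have hMmeas : Measurable M := hmeas.measurable.max measurable_const
  have hlogM_le : ∀ ω, Real.log (M ω) ≤ max (Real.log (L' ω)) (-Real.log ((m:ℝ)+1)) := by
    intro ω
    rcases le_total δ (L' ω) with h | h
    · rw [hMdef]; simp only [max_eq_left h]; exact le_max_left _ _
    · rw [hMdef]; simp only [max_eq_right h]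
      rw [hδ, Real.log_inv]
      exact le_max_right _ _
  have hIntlogM : Integrable (fun ω => Real.log (M ω)) P := by
    refine Integrable.mono' ((hIntL.add (integrable_const δ)).add (integrable_const δ⁻¹))
      (Real.measurable_log.comp hMmeas).aestronglyMeasurable
      (Eventually.of_forall fun ω => ?_)
    rw [Real.norm_eq_abs]
    have h1 : M ω ≤ L' ω + δ := max_le (by linarith [hδpos.le]) (by linarith [hnn ω])
    have h2 : (M ω)⁻¹ ≤ δ⁻¹ := inv_anti₀ hδpos (hMge ω)
    calc |Real.log (M ω)| ≤ M ω + (M ω)⁻¹ := abs_log_le (hMpos ω).le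
    _ ≤ L' ω + δ + δ⁻¹ := by linarith
  have hintMneg : ∫ ω, Real.log (M ω) ∂P < 0 := by
    refine lt_of_le_of_lt ?_ hm
    refine integral_mono hIntlogM ?_ hlogM_le
    refine Integrable.mono' hlogint.abs
      ((Real.measurable_log.comp hmeas.measurable).max measurable_const).aestronglyMeasurable
      (Eventually.of_forall fun ω => ?_)
    rw [Real.norm_eq_abs, abs_le]
    have hlm : 0 ≤ Real.log ((m:ℝ)+1) := Real.log_nonneg (by push_cast; linarith)
    exact ⟨le_trans (neg_abs_le _) (le_max_left _ _),
      max_le (le_abs_self _) (by linarith [abs_nonneg (Real.log (L' ω))])⟩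
  -- Step 2: slope argument for M
  have hIntMa : ∀ a : ℝ, 0 ≤ a → a ≤ 1 → Integrable (fun ω => M ω ^ a) P := by
    intro a ha0 ha1
    refine Integrable.mono' ((hInt a).add (integrable_const (δ ^ a)))
      (((Real.continuous_rpow_const ha0).measurable.comp hMmeas)).aestronglyMeasurable
      (Eventually.of_forall fun ω => ?_)
    rw [Real.norm_eq_abs, abs_of_nonneg (Real.rpow_nonneg (hMpos ω).le a)]
    calc M ω ^ a ≤ (L' ω + δ) ^ a :=
      Real.rpow_le_rpow (hMpos ω).le (max_le (by linarith [hδpos.le]) (by linarith [hnn ω])) ha0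
    _ ≤ L' ω ^ a + δ ^ a := real_rpow_add_le (hnn ω) hδpos.le ha0 ha1
  have hFn : ∃ n : ℕ, ∫ ω, (M ω ^ ((n:ℝ)+1)⁻¹ - 1) / ((n:ℝ)+1)⁻¹ ∂P < 0 := by
    have hbint : Integrable (fun ω => (L' ω + δ) * (L' ω + δ) + δ⁻¹) P := by
      have h2 : Integrable (fun ω => L' ω * L' ω) P := by
        have h2' : Integrable (fun ω => L' ω ^ (2:ℝ)) P := hInt 2
        refine h2'.congr (Eventually.of_forall fun ω => ?_)
        show L' ω ^ (2:ℝ) = L' ω * L' ω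
        rw [show (2:ℝ) = ((2:ℕ):ℝ) by norm_num, Real.rpow_natCast]; ring
      have : Integrable (fun ω => L' ω * L' ω + 2 * δ * L' ω + δ * δ + δ⁻¹) P :=
        ((h2.add ((hIntL.const_mul (2*δ)))).add (integrable_const _)).add (integrable_const _)
      refine this.congr (Eventually.of_forall fun ω => by ring)
    refine (tendsto_integral_of_dominated_convergence
      (fun ω => (L' ω + δ) * (L' ω + δ) + δ⁻¹) (fun n => ?_) hbint
      (fun n => Eventually.of_forall fun ω => ?_)
      (Eventually.of_forall fun ω => tendsto_rpow_slope (hMpos ω))).eventually_lt_const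
      hintMneg |>.exists
    · have ha0' : (0:ℝ) ≤ ((n:ℝ)+1)⁻¹ := by positivity
      exact ((((Real.continuous_rpow_const ha0').measurable.comp hMmeas).sub
        measurable_const).div_const _).aestronglyMeasurable
    · have ha0 : (0:ℝ) < ((n:ℝ)+1)⁻¹ := by positivity
      have ha1 : ((n:ℝ)+1)⁻¹ ≤ 1 := by
        rw [inv_le_one_iff₀]; right; push_cast; linarith
      have hkey := abs_rpow_sub_one_le (hMpos ω) ha0 ha1
      rw [Real.norm_eq_abs, abs_div, abs_of_pos ha0, div_le_iff₀ ha0]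
      have hMle : M ω ≤ L' ω + δ := max_le (by linarith [hδpos.le]) (by linarith [hnn ω])
      have h3 : M ω * M ω ≤ (L' ω + δ) * (L' ω + δ) :=
        mul_le_mul hMle hMle (hMpos ω).le (by linarith [hnn ω, hδpos.le])
      have h4 : 1 / M ω ≤ δ⁻¹ := by
        rw [one_div]; exact inv_anti₀ hδpos (hMge ω)
      calc |M ω ^ ((n:ℝ)+1)⁻¹ - 1| ≤ ((n:ℝ)+1)⁻¹ * (M ω * M ω + 1 / M ω) := hkey
      _ ≤ ((L' ω + δ) * (L' ω + δ) + δ⁻¹) * ((n:ℝ)+1)⁻¹ := by rw [mul_comm]; gcongr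
  obtain ⟨n, hn⟩ := hFn
  set α : ℝ := ((n:ℝ)+1)⁻¹ with hαdef
  have hα0 : 0 < α := by positivity
  have hα1 : α ≤ 1 := by rw [hαdef, inv_le_one_iff₀]; right; push_cast; linarith
  refine ⟨α, hα0, hα1, ?_⟩
  have hIntMα := hIntMa α hα0.le hα1
  have hsub : ∫ ω, (M ω ^ α - 1) ∂P = (∫ ω, M ω ^ α ∂P) - 1 := by
    rw [integral_sub hIntMα (integrable_const 1)]; simp
  have hsum : ∫ ω, (M ω ^ α - 1) / α ∂P = ((∫ ω, M ω ^ α ∂P) - 1) / α := by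
    rw [integral_div, hsub]
  rw [hsum] at hn
  have hMint : ∫ ω, M ω ^ α ∂P < 1 := by
    have := (div_neg_iff.mp hn)
    rcases this with ⟨h1, _⟩ | ⟨_, h2⟩
    · linarith
    · linarith [hα0]
  calc ∫ ω, L' ω ^ α ∂P ≤ ∫ ω, M ω ^ α ∂P := by
        refine integral_mono (hInt α) hIntMα fun ω => ?_
        exact Real.rpow_le_rpow (hnn ω) (hMgeL ω) hα0.le
  _ < 1 := hMint

set_option maxHeartbeats 3000000 in
/-- Polynomial tail decay: let `X` be a complete metric space and `μ` a compactly supported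
probability measure on Lipschitz self-maps with `χ_μ < 0` and `E[ρ(g)^t] < ∞` for all `t ∈ ℝ`,
with unique stationary measure `ν`. Then there is `α = α(μ) > 0` such that for all `R > 0` and
`x ∈ X`, `ν({y : d(x,y) ≥ R}) ≪_{μ,x} R^{−α}`. -/
theorem stationary_polynomial_tail_decay
    {X : Type*} [MetricSpace X] [CompleteSpace X] [MeasurableSpace X] [BorelSpace X]
    [MeasurableSpace (X → X)]
    (heval : Measurable fun p : (X → X) × X => p.1 p.2)
    {Ω : Type*} [MeasurableSpace Ω] (P : Measure Ω) [IsProbabilityMeasure P]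
    (μ : Measure (X → X)) [IsProbabilityMeasure μ]
    (γ : ℕ → Ω → X → X)
    (hmeas : ∀ n, Measurable (γ n))
    (hindep : iIndepFun γ P)
    (hident : ∀ n, Measure.map (γ n) P = μ)
    (hLip : ∀ n ω, ∃ K : NNReal, LipschitzWith K (γ n ω))
    (hmom : ∀ t : ℝ, Integrable (fun ω => lipConst (γ 0 ω) ^ t) P)
    (hchi : (∫ ω, log (lipConst (γ 0 ω)) ∂P) < 0)
    (hA : ∀ x : X, ∃ A : ℝ, ∀ n, ∀ᵐ ω ∂P, dist x (γ n ω x) ≤ A)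
    (ν : Measure X) [IsProbabilityMeasure ν] (hν : IsStationaryMeasure μ ν) :
    ∃ α > (0 : ℝ), ∀ x : X, ∃ C > (0 : ℝ), ∀ R > (0 : ℝ),
      (ν {y : X | R ≤ dist x y}).toReal ≤ C * R ^ (-α) := by
  classical
  have hint1 : Integrable (fun ω => lipConst (γ 0 ω)) P := by simpa using hmom 1
  obtain ⟨L0, hL0meas, hL0ae⟩ := hint1.aestronglyMeasurable
  set L' : Ω → ℝ := fun ω => max (L0 ω) 0 with hL'def
  have hL'meas : StronglyMeasurable L' :=
    (hL0meas.measurable.max measurable_const).stronglyMeasurable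
  have hL'nonneg : ∀ ω, 0 ≤ L' ω := fun ω => le_max_right _ _
  have hL'ae : (fun ω => lipConst (γ 0 ω)) =ᵐ[P] L' := by
    filter_upwards [hL0ae] with ω h
    rw [hL'def]; simp only; rw [← h]
    exact (max_eq_left (lipConst_nonneg _)).symm
  have hIntL' : ∀ t : ℝ, Integrable (fun ω => L' ω ^ t) P := fun t =>
    (hmom t).congr (by filter_upwards [hL'ae] with ω h; rw [h])
  have hchi' : ∫ ω, Real.log (L' ω) ∂P < 0 := by
    refine lt_of_le_of_lt (le_of_eq ?_) hchi
    exact integral_congr_ae (by filter_upwards [hL'ae] with ω h; rw [h])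
  obtain ⟨α, hα0, hα1, hc⟩ := exists_alpha P L' hL'meas hL'nonneg hIntL' hchi'
  set c := ∫ ω, L' ω ^ α ∂P with hcdef
  have hc0 : 0 ≤ c := integral_nonneg fun ω => Real.rpow_nonneg (hL'nonneg ω) α
  have h1c : 0 < 1 - c := by linarith
  refine ⟨α, hα0, fun x => ?_⟩
  obtain ⟨A, hAx⟩ := hA x
  have hA0 := hAx 0
  have hAnn : 0 ≤ A := by
    have : (MeasureTheory.ae P).NeBot := ae_neBot.2 (IsProbabilityMeasure.ne_zero P)
    obtain ⟨ω, hω⟩ := hA0.exists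
    exact le_trans dist_nonneg hω
  set K := A ^ α / (1 - c) with hKdef
  have hAα : 0 ≤ A ^ α := Real.rpow_nonneg hAnn α
  have hK0 : 0 ≤ K := div_nonneg hAα h1c.le
  refine ⟨K + 1, by linarith, fun R hR => ?_⟩
  have hRα : 0 < R ^ α := Real.rpow_pos_of_pos hR α
  -- a.e. properties of ω
  have hLip' : ∀ᵐ ω ∂P, (∀ a b : X, dist (γ 0 ω a) (γ 0 ω b) ≤ L' ω * dist a b)
      ∧ dist x (γ 0 ω x) ≤ A := by
    filter_upwards [hL'ae, hA0] with ω h1 h2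
    exact ⟨fun a b => h1 ▸ dist_le_lipConst (hLip 0 ω) a b, h2⟩
  set Φ : ℝ → ℝ := fun s => ∫ y, min (|s| * dist x y) R ^ α ∂ν with hΦdef
  have hΦnonneg : ∀ s, 0 ≤ Φ s := fun s =>
    integral_nonneg fun y => Real.rpow_nonneg (le_min (by positivity) hR.le) α
  have hΦle : ∀ s, Φ s ≤ R ^ α := by
    intro s
    obtain ⟨f, hf, hf0, hfub⟩ := exists_bcf x s R α hR.le hα0
    have : Φ s = ∫ y, f y ∂ν :=
      integral_congr_ae (Eventually.of_forall fun y => (hf y).symm)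
    rw [this]
    calc ∫ y, f y ∂ν ≤ ∫ _, R ^ α ∂ν := integral_mono (f.integrable ν) (integrable_const _) hfub
    _ = R ^ α := by simp
  have hΦcont : Continuous Φ := by
    refine continuous_of_dominated (bound := fun _ => R ^ α) (fun s => ?_)
      (fun s => Eventually.of_forall fun y => ?_) (integrable_const _)
      (Eventually.of_forall fun y => ?_)
    · obtain ⟨f, hf, _, _⟩ := exists_bcf x s R α hR.le hα0
      exact (f.continuous.congr fun y => by rw [hf]).aestronglyMeasurable
    · rw [Real.norm_eq_abs,
        abs_of_nonneg (Real.rpow_nonneg (le_min (by positivity) hR.le) α)]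
      exact Real.rpow_le_rpow (le_min (by positivity) hR.le) (min_le_right _ _) hα0.le
    · exact (Real.continuous_rpow_const hα0.le).comp
        ((continuous_abs.mul continuous_const).min continuous_const)
  have hΦLmeas : ∀ s : ℝ, AEStronglyMeasurable (fun ω => Φ (s * L' ω)) P := fun s =>
    (hΦcont.measurable.comp (hL'meas.measurable.const_mul s)).aestronglyMeasurable
  have hΦLint : ∀ s : ℝ, Integrable (fun ω => Φ (s * L' ω)) P := by
    intro s
    refine Integrable.mono' (integrable_const (R ^ α)) (hΦLmeas s)
      (Eventually.of_forall fun ω => ?_)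
    rw [Real.norm_eq_abs, abs_of_nonneg (hΦnonneg _)]
    exact hΦle _
  have hstep : ∀ s : ℝ, 0 ≤ s → Φ s ≤ (s * A) ^ α + ∫ ω, Φ (s * L' ω) ∂P := by
    intro s hs
    obtain ⟨f, hf, hf0, hfub⟩ := exists_bcf x s R α hR.le hα0
    have hΦs : Φ s = ∫ y, f y ∂ν :=
      integral_congr_ae (Eventually.of_forall fun y => (hf y).symm)
    have hFmeas : StronglyMeasurable (fun g : X → X => ∫ y, f (g y) ∂ν) := by
      have h1 : StronglyMeasurable (fun p : (X → X) × X => f (p.1 p.2)) :=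
        (f.continuous.measurable.comp heval).stronglyMeasurable
      exact h1.integral_prod_right'
    have hmap : ∫ g, ∫ y, f (g y) ∂ν ∂μ = ∫ ω, ∫ y, f (γ 0 ω y) ∂ν ∂P := by
      rw [← hident 0, integral_map (hmeas 0).aemeasurable hFmeas.aestronglyMeasurable]
    have hptwise : ∀ᵐ ω ∂P, ∫ y, f (γ 0 ω y) ∂ν ≤ (s * A) ^ α + Φ (s * L' ω) := by
      filter_upwards [hLip'] with ω hω
      obtain ⟨hlip, hdist⟩ := hω
      obtain ⟨f2, hf2, hf20, hf2ub⟩ := exists_bcf x (s * L' ω) R α hR.le hα0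
      have hL := hL'nonneg ω
      have hptw : ∀ y, f (γ 0 ω y) ≤ (s * A) ^ α + f2 y := by
        intro y
        rw [hf, hf2, abs_of_nonneg hs, abs_of_nonneg (by positivity : 0 ≤ s * L' ω)]
        have hd1 : dist x (γ 0 ω y) ≤ A + L' ω * dist x y :=
          (dist_triangle x (γ 0 ω x) (γ 0 ω y)).trans (by linarith [hlip x y])
        have h2 : min (s * dist x (γ 0 ω y)) R ≤ s * A + min (s * L' ω * dist x y) R := by
          have h3 : min (s * dist x (γ 0 ω y)) R
              ≤ min (s * A + s * L' ω * dist x y) R := by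
            refine min_le_min ?_ le_rfl
            nlinarith [dist_nonneg (x := x) (y := γ 0 ω y)]
          have h4 : min (s * A + s * L' ω * dist x y) R
              ≤ min (s * A + s * L' ω * dist x y) (s * A + R) := by
            refine min_le_min le_rfl ?_
            nlinarith
          rw [min_add_add_left] at h4
          exact h3.trans h4
        have hmin0 : 0 ≤ min (s * dist x (γ 0 ω y)) R := le_min (by positivity) hR.le
        calc min (s * dist x (γ 0 ω y)) R ^ α
            ≤ (s * A + min (s * L' ω * dist x y) R) ^ α :=
          Real.rpow_le_rpow hmin0 h2 hα0.le
        _ ≤ (s * A) ^ α + min (s * L' ω * dist x y) R ^ α :=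
          real_rpow_add_le (by positivity) (le_min (by positivity) hR.le) hα0.le hα1
      have hgcont : Continuous (γ 0 ω) := by
        obtain ⟨Kω, hKω⟩ := hLip 0 ω
        exact hKω.continuous
      have hig1 : Integrable (fun y => f (γ 0 ω y)) ν := by
        have := (f.compContinuous ⟨γ 0 ω, hgcont⟩).integrable ν
        exact this.congr (Eventually.of_forall fun y => rfl)
      calc ∫ y, f (γ 0 ω y) ∂ν ≤ ∫ y, ((s * A) ^ α + f2 y) ∂ν :=
        integral_mono hig1 ((integrable_const _).add (f2.integrable ν)) hptw
      _ = (s * A) ^ α + Φ (s * L' ω) := by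
        rw [integral_add (integrable_const _) (f2.integrable ν), integral_const]
        simp only [measure_univ, ENNReal.toReal_one, probReal_univ, smul_eq_mul, one_mul]
        congr 1
        exact integral_congr_ae (Eventually.of_forall fun y => hf2 y)
    have hcomp_int : Integrable (fun ω => ∫ y, f (γ 0 ω y) ∂ν) P := by
      refine Integrable.mono' (integrable_const ‖f‖)
        ((hFmeas.comp_measurable (hmeas 0)).aestronglyMeasurable)
        (Eventually.of_forall fun ω => ?_)
      calc ‖∫ y, f (γ 0 ω y) ∂ν‖ ≤ ‖f‖ * (ν Set.univ).toReal :=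
        norm_integral_le_of_norm_le_const (Eventually.of_forall fun y => f.norm_coe_le_norm _)
      _ = ‖f‖ := by simp
    have hRHSint : Integrable (fun ω => (s * A) ^ α + Φ (s * L' ω)) P :=
      (integrable_const _).add (hΦLint s)
    calc Φ s = ∫ y, f y ∂ν := hΦs
    _ = ∫ g, ∫ y, f (g y) ∂ν ∂μ := (hν f).symm
    _ = ∫ ω, ∫ y, f (γ 0 ω y) ∂ν ∂P := hmap
    _ ≤ ∫ ω, ((s * A) ^ α + Φ (s * L' ω)) ∂P := integral_mono_ae hcomp_int hRHSint hptwise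
    _ = (s * A) ^ α + ∫ ω, Φ (s * L' ω) ∂P := by
      rw [integral_add (integrable_const _) (hΦLint s), integral_const]
      simp
  -- the main induction
  have claim : ∀ D : ℝ, 0 ≤ D → ∀ n : ℕ, ∀ s : ℝ, 0 ≤ s →
      Φ s ≤ s ^ α * (A ^ α * (∑ k ∈ Finset.range n, c ^ k))
        + s ^ α * c ^ n * (∫ y, min (|(1:ℝ)| * dist x y) D ^ α ∂ν)
        + R ^ α * (ν {y : X | D < dist x y}).toReal := by
    intro D hD n
    obtain ⟨fD, hfD, hfD0, hfDub⟩ := exists_bcf x 1 D α hD hα0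
    set W := ∫ y, min (|(1:ℝ)| * dist x y) D ^ α ∂ν with hWdef
    have hWf : W = ∫ y, fD y ∂ν :=
      integral_congr_ae (Eventually.of_forall fun y => (hfD y).symm)
    have hW0 : 0 ≤ W := integral_nonneg fun y =>
      Real.rpow_nonneg (le_min (by positivity) hD) α
    have hSmeas : MeasurableSet {y : X | D < dist x y} :=
      (isOpen_lt continuous_const (continuous_const.dist continuous_id)).measurableSet
    have htail0 : 0 ≤ R ^ α * (ν {y : X | D < dist x y}).toReal := by positivity
    induction n with
    | zero =>
      intro s hs
      have hbase : Φ s ≤ s ^ α * W + R ^ α * (ν {y : X | D < dist x y}).toReal := by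
        obtain ⟨f, hf, hf0, hfub⟩ := exists_bcf x s R α hR.le hα0
        have hΦs : Φ s = ∫ y, f y ∂ν :=
          integral_congr_ae (Eventually.of_forall fun y => (hf y).symm)
        have hptw : ∀ y, f y ≤ s ^ α * fD y
            + Set.indicator {y : X | D < dist x y} (fun _ => R ^ α) y := by
          intro y
          rw [hf, hfD]
          by_cases hy : D < dist x y
          · have hymem : y ∈ {y : X | D < dist x y} := hy
            rw [Set.indicator_of_mem hymem]
            have h1 : min (|s| * dist x y) R ^ α ≤ R ^ α :=
              Real.rpow_le_rpow (le_min (by positivity) hR.le) (min_le_right _ _) hα0.le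
            have h2 : 0 ≤ s ^ α * min (|(1:ℝ)| * dist x y) D ^ α :=
              mul_nonneg (Real.rpow_nonneg hs α)
                (Real.rpow_nonneg (le_min (by positivity) hD) α)
            linarith
          · push_neg at hy
            have hynot : y ∉ {y : X | D < dist x y} := fun h => absurd h (not_lt.2 hy)
            rw [Set.indicator_of_notMem hynot, abs_of_nonneg hs]
            simp only [abs_one, one_mul]
            rw [min_eq_left hy]
            have h1 : min (s * dist x y) R ^ α ≤ (s * dist x y) ^ α :=
              Real.rpow_le_rpow (le_min (by positivity) hR.le) (min_le_left _ _) hα0.le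
            rw [Real.mul_rpow hs dist_nonneg] at h1
            linarith [add_zero (s ^ α * dist x y ^ α)]
        have hint2 : Integrable (fun y => s ^ α * fD y
            + Set.indicator {y : X | D < dist x y} (fun _ => R ^ α) y) ν :=
          ((fD.integrable ν).const_mul _).add ((integrable_const _).indicator hSmeas)
        calc Φ s = ∫ y, f y ∂ν := hΦs
        _ ≤ ∫ y, (s ^ α * fD y
            + Set.indicator {y : X | D < dist x y} (fun _ => R ^ α) y) ∂ν :=
          integral_mono (f.integrable ν) hint2 hptw
        _ = s ^ α * W + R ^ α * (ν {y : X | D < dist x y}).toReal := by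
          rw [integral_add ((fD.integrable ν).const_mul _)
            ((integrable_const _).indicator hSmeas), integral_const_mul,
            integral_indicator_const _ hSmeas, hWf]
          simp [mul_comm, measureReal_def]
      simpa using hbase
    | succ n ih =>
      intro s hs
      have hsL : ∀ ω, 0 ≤ s * L' ω := fun ω => mul_nonneg hs (hL'nonneg ω)
      have hih : ∀ ω, Φ (s * L' ω) ≤ (s ^ α * (A ^ α * (∑ k ∈ Finset.range n, c ^ k))
          + s ^ α * c ^ n * W) * L' ω ^ α
          + R ^ α * (ν {y : X | D < dist x y}).toReal := by
        intro ω
        have := ih (s * L' ω) (hsL ω)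
        rw [Real.mul_rpow hs (hL'nonneg ω)] at this
        calc Φ (s * L' ω) ≤ s ^ α * L' ω ^ α * (A ^ α * (∑ k ∈ Finset.range n, c ^ k))
            + s ^ α * L' ω ^ α * c ^ n * W
            + R ^ α * (ν {y : X | D < dist x y}).toReal := this
        _ = (s ^ α * (A ^ α * (∑ k ∈ Finset.range n, c ^ k)) + s ^ α * c ^ n * W) * L' ω ^ α
            + R ^ α * (ν {y : X | D < dist x y}).toReal := by ring
      have hIntRHS : Integrable (fun ω => (s ^ α * (A ^ α * (∑ k ∈ Finset.range n, c ^ k))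
          + s ^ α * c ^ n * W) * L' ω ^ α
          + R ^ α * (ν {y : X | D < dist x y}).toReal) P :=
        (((hIntL' α).const_mul _)).add (integrable_const _)
      have hsum : ∫ ω, ((s ^ α * (A ^ α * (∑ k ∈ Finset.range n, c ^ k))
          + s ^ α * c ^ n * W) * L' ω ^ α
          + R ^ α * (ν {y : X | D < dist x y}).toReal) ∂P
          = (s ^ α * (A ^ α * (∑ k ∈ Finset.range n, c ^ k)) + s ^ α * c ^ n * W) * c
          + R ^ α * (ν {y : X | D < dist x y}).toReal := by
        rw [integral_add ((hIntL' α).const_mul _) (integrable_const _), integral_const_mul,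
          integral_const]
        simp [hcdef]
      calc Φ s ≤ (s * A) ^ α + ∫ ω, Φ (s * L' ω) ∂P := hstep s hs
      _ ≤ (s * A) ^ α + ((s ^ α * (A ^ α * (∑ k ∈ Finset.range n, c ^ k))
          + s ^ α * c ^ n * W) * c + R ^ α * (ν {y : X | D < dist x y}).toReal) := by
        refine add_le_add_right ?_ _
        rw [← hsum]
        exact integral_mono (hΦLint s) hIntRHS hih
      _ = s ^ α * (A ^ α * (∑ k ∈ Finset.range (n+1), c ^ k))
          + s ^ α * c ^ (n+1) * W + R ^ α * (ν {y : X | D < dist x y}).toReal := by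
        rw [Real.mul_rpow hs hAnn, geom_sum_succ]
        ring
  -- Markov inequality
  set S := {y : X | R ≤ dist x y} with hSdef
  have hSmeas : MeasurableSet S :=
    (isClosed_le continuous_const (continuous_const.dist continuous_id)).measurableSet
  have hMarkov : R ^ α * (ν S).toReal ≤ Φ 1 := by
    obtain ⟨f1, hf1, hf10, hf1ub⟩ := exists_bcf x 1 R α hR.le hα0
    have hΦ1 : Φ 1 = ∫ y, f1 y ∂ν :=
      integral_congr_ae (Eventually.of_forall fun y => (hf1 y).symm)
    have hptw : ∀ y, Set.indicator S (fun _ => R ^ α) y ≤ f1 y := by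
      intro y
      rw [hf1]
      by_cases hy : y ∈ S
      · rw [Set.indicator_of_mem hy]
        have hyd : R ≤ dist x y := hy
        rw [abs_one, one_mul, min_eq_right hyd]
      · rw [Set.indicator_of_notMem hy]
        exact Real.rpow_nonneg (le_min (by positivity) hR.le) α
    calc R ^ α * (ν S).toReal = ∫ y, Set.indicator S (fun _ => R ^ α) y ∂ν := by
          rw [integral_indicator_const _ hSmeas]; simp [mul_comm, measureReal_def]
    _ ≤ ∫ y, f1 y ∂ν :=
      integral_mono ((integrable_const _).indicator hSmeas) (f1.integrable ν) hptw
    _ = Φ 1 := hΦ1.symm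
  -- uniform bound on Φ 1
  have hΦ1K : Φ 1 ≤ A ^ α / (1 - c) := by
    have hkey : ∀ ε : ℝ, 0 < ε → Φ 1 ≤ A ^ α / (1 - c) + ε := by
      intro ε hε
      have htail : Tendsto (fun m : ℕ => R ^ α * (ν {y : X | (m:ℝ) < dist x y}).toReal)
          atTop (𝓝 0) := by
        have h1 : Tendsto (fun m : ℕ => ν {y : X | (m:ℝ) < dist x y}) atTop
            (𝓝 (ν (⋂ m : ℕ, {y : X | (m:ℝ) < dist x y}))) := by
          refine tendsto_measure_iInter_atTop
            (fun m => ((isOpen_lt continuous_const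
              (continuous_const.dist continuous_id)).measurableSet).nullMeasurableSet)
            ?_ ⟨0, measure_ne_top _ _⟩
          intro m m' hmm' y hy
          simp only [Set.mem_setOf_eq] at hy ⊢
          exact lt_of_le_of_lt (by exact_mod_cast hmm') hy
        have h2 : (⋂ m : ℕ, {y : X | (m:ℝ) < dist x y}) = (∅ : Set X) := by
          ext y
          simp only [Set.mem_iInter, Set.mem_setOf_eq, Set.mem_empty_iff_false, iff_false,
            not_forall, not_lt]
          obtain ⟨m, hm⟩ := exists_nat_gt (dist x y)
          exact ⟨m, hm.le⟩
        rw [h2, measure_empty] at h1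
        have h3 : Tendsto (fun m : ℕ => (ν {y : X | (m:ℝ) < dist x y}).toReal) atTop (𝓝 0) := by
          have h4 := (ENNReal.tendsto_toReal ENNReal.zero_ne_top).comp h1
          exact h4
        simpa using Filter.Tendsto.const_mul (R ^ α) h3
      obtain ⟨m, hm⟩ := (htail.eventually_lt_const (by linarith : (0:ℝ) < ε/2)).exists
      have hpow : Tendsto (fun n : ℕ => c ^ n * (m:ℝ) ^ α) atTop (𝓝 0) := by
        simpa using (tendsto_pow_atTop_nhds_zero_of_lt_one hc0 hc).mul_const ((m:ℝ) ^ α)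
      obtain ⟨n, hn⟩ := (hpow.eventually_lt_const (by linarith : (0:ℝ) < ε/2)).exists
      have hclaim := claim (m:ℝ) (Nat.cast_nonneg m) n 1 zero_le_one
      rw [Real.one_rpow, one_mul, one_mul] at hclaim
      have hWub : (∫ y, min (|(1:ℝ)| * dist x y) ((m:ℝ)) ^ α ∂ν) ≤ (m:ℝ) ^ α := by
        obtain ⟨fD, hfD, hfD0, hfDub⟩ := exists_bcf x 1 (m:ℝ) α (Nat.cast_nonneg m) hα0
        rw [integral_congr_ae (Eventually.of_forall fun y => (hfD y).symm)]
        calc ∫ y, fD y ∂ν ≤ ∫ _, (m:ℝ) ^ α ∂ν :=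
          integral_mono (fD.integrable ν) (integrable_const _) hfDub
        _ = (m:ℝ) ^ α := by simp
      have hSn : (∑ k ∈ Finset.range n, c ^ k) ≤ 1 / (1 - c) := by
        rw [le_div_iff₀ h1c]
        have h5 := geom_sum_mul c n
        nlinarith [pow_nonneg hc0 n]
      have hW0 : 0 ≤ ∫ y, min (|(1:ℝ)| * dist x y) ((m:ℝ)) ^ α ∂ν :=
        integral_nonneg fun y => Real.rpow_nonneg (le_min (by positivity) (Nat.cast_nonneg m)) α
      have hcn : (0:ℝ) ≤ c ^ n := pow_nonneg hc0 n
      have hb1 : A ^ α * (∑ k ∈ Finset.range n, c ^ k) ≤ A ^ α / (1 - c) := by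
        rw [div_eq_mul_inv, ← one_div]
        exact mul_le_mul_of_nonneg_left hSn hAα
      have hb2 : c ^ n * (∫ y, min (|(1:ℝ)| * dist x y) ((m:ℝ)) ^ α ∂ν) ≤ c ^ n * (m:ℝ) ^ α :=
        mul_le_mul_of_nonneg_left hWub hcn
      linarith
    by_contra hcon
    push_neg at hcon
    have := hkey ((Φ 1 - A ^ α / (1 - c)) / 2) (by linarith)
    linarith
  -- conclusion
  have h5 : R ^ α * (ν S).toReal ≤ K := by
    rw [hKdef]; exact hMarkov.trans hΦ1K
  rw [Real.rpow_neg hR.le]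
  have h6 : (ν S).toReal ≤ K * (R ^ α)⁻¹ := by
    rw [← div_eq_mul_inv, le_div_iff₀ hRα]
    linarith [h5, mul_comm ((ν S).toReal) (R ^ α)]
  calc (ν S).toReal ≤ K * (R ^ α)⁻¹ := h6
  _ ≤ (K + 1) * (R ^ α)⁻¹ := by
    have : (0:ℝ) ≤ (R ^ α)⁻¹ := by positivity
    nlinarith
end

section
/- Let pₙ = (6/π²)·n^{−2} and aₙ = 1/n if n is not a perfect square, aₙ = (√n)^{√n} if n is a perfect square. Then the measure μ = Σₙ pₙ δ_{fₙ} (with fₙ(x) = aₙ·max(x−n, 0)) satisfies: χ_μ = Σₙ pₙ log aₙ ∈ (−∞, 0), while Σₙ pₙ·aₙ^t = ∞ for every t > 0. -/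
open Real

/-- `pₙ = 6/(π²n²)`. -/
noncomputable def pSeq (n : ℕ) : ℝ := 6 / (π ^ 2 * (n : ℝ) ^ 2)

/-- `aₙ = 1/n` if `n` is not a perfect square, `aₙ = (√n)^{√n}` if `n` is a perfect square. -/
noncomputable def aSeq (n : ℕ) : ℝ :=
  if IsSquare n then Real.sqrt n ^ Real.sqrt n else 1 / n

lemma aSeq_sq (k : ℕ) : aSeq (k ^ 2) = (k : ℝ) ^ (k : ℝ) := by
  have hsq : IsSquare (k ^ 2) := ⟨k, sq k⟩
  rw [aSeq, if_pos hsq]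
  have : Real.sqrt ((k ^ 2 : ℕ) : ℝ) = (k : ℝ) := by
    push_cast
    exact Real.sqrt_sq (Nat.cast_nonneg k)
  rw [this]

lemma log_aSeq_sq (k : ℕ) (hk : 1 ≤ k) :
    Real.log (aSeq (k ^ 2)) = (k : ℝ) * Real.log k := by
  rw [aSeq_sq, Real.log_rpow (by exact_mod_cast hk)]

lemma term_sq (k : ℕ) (hk : 1 ≤ k) :
    pSeq (k ^ 2) * Real.log (aSeq (k ^ 2)) = 6 / π ^ 2 * (Real.log k / (k : ℝ) ^ 3) := by
  have hk0 : (k : ℝ) ≠ 0 := by positivity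
  rw [log_aSeq_sq k hk, pSeq]
  have hpi : (π : ℝ) ≠ 0 := Real.pi_ne_zero
  push_cast
  field_simp

lemma term_nonsq (k : ℕ) (hk : ¬ IsSquare k) :
    pSeq k * Real.log (aSeq k) = -(6 / π ^ 2 * (Real.log k / (k : ℝ) ^ 2)) := by
  have hk0 : k ≠ 0 := by rintro rfl; exact hk ⟨0, rfl⟩
  have hk0' : (k : ℝ) ≠ 0 := by exact_mod_cast hk0
  rw [aSeq, if_neg hk, pSeq, one_div, Real.log_inv]
  have hpi : (π : ℝ) ≠ 0 := Real.pi_ne_zero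
  field_simp

lemma log_ge_aux {a b : ℕ} {k : ℝ} (h2 : (2:ℝ) ^ a ≤ k ^ b) :
    (a : ℝ) * Real.log 2 ≤ (b : ℝ) * Real.log k := by
  have := Real.log_le_log (pow_pos two_pos a) h2
  rwa [Real.log_pow, Real.log_pow] at this

lemma log_le_two_sqrt {x : ℝ} (hx : 1 ≤ x) : Real.log x ≤ 2 * Real.sqrt x := by
  have h0 : (0:ℝ) < x := by linarith
  have h1 : Real.log (Real.sqrt x) ≤ Real.sqrt x - 1 :=
    Real.log_le_sub_one_of_pos (Real.sqrt_pos.2 h0)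
  rw [Real.log_sqrt h0.le] at h1
  nlinarith [Real.sqrt_nonneg x]

noncomputable def sFun (n : ℕ) : ℝ :=
  if IsSquare (n + 1) then pSeq (n + 1) * Real.log (aSeq (n + 1)) else 0

noncomputable def rFun (n : ℕ) : ℝ :=
  if IsSquare (n + 1) then 0 else pSeq (n + 1) * Real.log (aSeq (n + 1))

def iFun (m : ℕ) : ℕ := (m + 2) ^ 2 - 1

lemma iFun_inj : Function.Injective iFun := by
  have h : StrictMono iFun := by
    intro a b hab
    have h1 : (a + 2) ^ 2 < (b + 2) ^ 2 := Nat.pow_lt_pow_left (by omega) (by norm_num)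
    exact Nat.sub_lt_sub_right (Nat.one_le_pow _ _ (by omega)) h1
  exact h.injective

lemma sFun_comp (m : ℕ) :
    sFun (iFun m) = 6 / π ^ 2 * (Real.log (m + 2) / ((m : ℝ) + 2) ^ 3) := by
  have h1 : iFun m + 1 = (m + 2) ^ 2 := by
    have h2 : 1 ≤ (m + 2) ^ 2 := Nat.one_le_pow _ _ (by omega)
    simp only [iFun]
    exact Nat.succ_pred_eq_of_pos h2
  rw [sFun, h1, if_pos ⟨m + 2, sq (m+2)⟩, term_sq (m + 2) (by omega)]
  push_cast
  ring_nf

lemma sFun_supp : ∀ n ∉ Set.range iFun, sFun n = 0 := by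
  intro n hn
  rw [sFun]
  split_ifs with h
  · obtain ⟨k, hk⟩ := h
    rcases Nat.lt_or_ge k 2 with hk2 | hk2
    · interval_cases k
      · omega
      · have : n = 0 := by omega
        subst this
        have : (1 : ℕ) = 1 ^ 2 := rfl
        rw [show (0:ℕ) + 1 = 1 ^ 2 from rfl, aSeq_sq]
        simp
    · exfalso
      refine hn ⟨k - 2, ?_⟩
      have h3 : k - 2 + 2 = k := by omega
      have h4 : k ^ 2 = k * k := sq k
      simp only [iFun, h3, sq k ▸ hk.symm]
      omega
  · rfl

lemma rFun_eval (n : ℕ) (h : ¬ IsSquare (n + 1)) :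
    rFun n = -(6 / π ^ 2 * (Real.log ((n : ℝ) + 1) / ((n : ℝ) + 1) ^ 2)) := by
  rw [rFun, if_neg h, term_nonsq _ h]
  push_cast
  ring_nf

lemma rFun_nonpos (n : ℕ) : rFun n ≤ 0 := by
  rw [rFun]
  split_ifs with h
  · exact le_refl 0
  · rw [term_nonsq _ h, neg_nonpos]
    have h1 : (0:ℝ) ≤ Real.log ((n:ℕ) + 1 : ℕ) := by
      apply Real.log_nonneg; exact_mod_cast Nat.one_le_iff_ne_zero.2 (by omega)
    positivity

lemma summable_sq_comp : Summable (fun m : ℕ => 6 / π ^ 2 * (Real.log (m + 2) / ((m : ℝ) + 2) ^ 3)) := by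
  have hbase : Summable (fun n : ℕ => 1 / (n : ℝ) ^ 2) :=
    Real.summable_one_div_nat_pow.2 (by norm_num)
  have hshift : Summable (fun m : ℕ => 1 / ((m : ℝ) + 2) ^ 2) := by
    have := (summable_nat_add_iff 2).2 hbase
    simpa using this
  apply Summable.of_nonneg_of_le (fun m => mul_nonneg (by positivity)
    (div_nonneg (Real.log_nonneg (by have := Nat.cast_nonneg (α := ℝ) m; linarith))
      (by positivity))) (fun m => ?_) (hshift.mul_left (6 / π ^ 2))
  have hx : (2:ℝ) ≤ (m:ℝ) + 2 := by
    have := Nat.cast_nonneg (α := ℝ) m; linarith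
  have hlog : Real.log ((m:ℝ) + 2) ≤ (m:ℝ) + 2 := by
    have := Real.log_le_sub_one_of_pos (show (0:ℝ) < (m:ℝ) + 2 by linarith)
    linarith
  have h1 : Real.log ((m:ℝ) + 2) / ((m:ℝ) + 2) ^ 3 ≤ 1 / ((m:ℝ) + 2) ^ 2 := by
    rw [div_le_div_iff₀ (by positivity) (by positivity)]
    nlinarith [Real.log_nonneg (show (1:ℝ) ≤ (m:ℝ) + 2 by linarith)]
  have hC : (0:ℝ) ≤ 6 / π ^ 2 := by positivity
  exact mul_le_mul_of_nonneg_left h1 hC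

lemma sFun_comp_eq : (sFun ∘ iFun) = fun m : ℕ => 6 / π ^ 2 * (Real.log (m + 2) / ((m : ℝ) + 2) ^ 3) := by
  funext m
  have := sFun_comp m
  simpa using this

lemma summable_sFun : Summable sFun := by
  rw [← iFun_inj.summable_iff sFun_supp, sFun_comp_eq]
  exact summable_sq_comp

lemma sqrt_div_sq (x : ℝ) (hx : 0 < x) : Real.sqrt x / x ^ 2 = (x ^ ((3:ℝ)/2))⁻¹ := by
  rw [Real.sqrt_eq_rpow, ← Real.rpow_natCast x 2, div_eq_mul_inv, ← Real.rpow_neg hx.le,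
    ← Real.rpow_add hx, ← Real.rpow_neg hx.le]
  norm_num

lemma summable_rFun : Summable rFun := by
  have hbase : Summable (fun n : ℕ => (((n : ℝ)) ^ ((3:ℝ)/2))⁻¹) :=
    Real.summable_nat_rpow_inv.2 (by norm_num)
  have hshift : Summable (fun n : ℕ => ((((n : ℝ) + 1)) ^ ((3:ℝ)/2))⁻¹) := by
    have := (summable_nat_add_iff 1).2 hbase
    simpa using this
  have htarget : Summable (fun n : ℕ => 12 / π ^ 2 * ((((n : ℝ) + 1)) ^ ((3:ℝ)/2))⁻¹) :=
    hshift.mul_left _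
  apply Summable.of_abs
  apply Summable.of_nonneg_of_le (fun n => abs_nonneg _) (fun n => ?_) htarget
  rw [rFun]
  split_ifs with h
  · simp
    positivity
  · rw [term_nonsq _ h, abs_neg, abs_of_nonneg]
    · have hx1 : (1:ℝ) ≤ ((n:ℕ) + 1 : ℕ) := by exact_mod_cast Nat.one_le_iff_ne_zero.2 (by omega)
      push_cast at hx1 ⊢
      set x : ℝ := (n:ℝ) + 1 with hxdef
      have hx0 : (0:ℝ) < x := by linarith
      have hlog : Real.log x ≤ 2 * Real.sqrt x := log_le_two_sqrt hx1
      have key : Real.sqrt x / x ^ 2 = (x ^ ((3:ℝ)/2))⁻¹ := sqrt_div_sq x hx0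
      have h1 : Real.log x / x ^ 2 ≤ 2 * (x ^ ((3:ℝ)/2))⁻¹ := by
        rw [← key, mul_div_assoc']
        exact div_le_div_of_nonneg_right hlog (by positivity)

      have hC : (0:ℝ) ≤ 6 / π ^ 2 := by positivity
      calc 6 / π ^ 2 * (Real.log x / x ^ 2) ≤ 6 / π ^ 2 * (2 * (x ^ ((3:ℝ)/2))⁻¹) :=
            mul_le_mul_of_nonneg_left h1 hC
        _ = 12 / π ^ 2 * (x ^ ((3:ℝ)/2))⁻¹ := by ring
    · have hx1 : (1:ℝ) ≤ ((n:ℕ) + 1 : ℕ) := by exact_mod_cast Nat.one_le_iff_ne_zero.2 (by omega)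
      have : (0:ℝ) ≤ Real.log ((n:ℕ) + 1 : ℕ) := Real.log_nonneg hx1
      positivity

lemma summable_inv_sq_shift : Summable (fun m : ℕ => 1 / ((m : ℝ) + 2) ^ 2) := by
  have hbase : Summable (fun n : ℕ => 1 / (n : ℝ) ^ 2) :=
    Real.summable_one_div_nat_pow.2 (by norm_num)
  have := (summable_nat_add_iff 2).2 hbase
  simpa using this

lemma summable_inv_cube_shift : Summable (fun m : ℕ => 1 / ((m : ℝ) + 2) ^ 3) := by
  have hbase : Summable (fun n : ℕ => 1 / (n : ℝ) ^ 3) :=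
    Real.summable_one_div_nat_pow.2 (by norm_num)
  have := (summable_nat_add_iff 2).2 hbase
  simpa using this

lemma tsum_inv_sq_shift : ∑' m : ℕ, 1 / ((m : ℝ) + 2) ^ 2 = π ^ 2 / 6 - 1 := by
  have h := hasSum_zeta_two
  have hs := h.summable
  have key := Summable.sum_add_tsum_nat_add 2 hs
  rw [h.tsum_eq] at key
  have h2 : ∑ i ∈ Finset.range 2, (1:ℝ) / (i : ℝ) ^ 2 = 1 := by
    simp [Finset.sum_range_succ]
  rw [h2] at key
  have h3 : ∑' (i : ℕ), (1:ℝ) / ((i + 2 : ℕ) : ℝ) ^ 2 = ∑' m : ℕ, 1 / ((m : ℝ) + 2) ^ 2 :=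
    tsum_congr fun i => by push_cast; ring
  rw [h3] at key
  linarith

lemma S3_le_tsum : (3161105947/16003008000 : ℝ) ≤ ∑' m : ℕ, 1 / ((m : ℝ) + 2) ^ 3 := by
  have h := Summable.sum_le_tsum (Finset.range 9) (fun i _ => by positivity) summable_inv_cube_shift
  have : ∑ m ∈ Finset.range 9, 1 / ((m : ℝ) + 2) ^ 3 = 3161105947/16003008000 := by
    norm_num [Finset.sum_range_succ]
  linarith

lemma tsum_sFun_le :
    ∑' n, sFun n ≤ 6 / π ^ 2 * (π ^ 2 / 6 - 1 - 3161105947/16003008000) := by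
  have hC : (0:ℝ) ≤ 6 / π ^ 2 := by positivity
  have hrhs : Summable (fun m : ℕ => 6 / π ^ 2 * (1 / ((m : ℝ) + 2) ^ 2 - 1 / ((m : ℝ) + 2) ^ 3)) :=
    (summable_inv_sq_shift.sub summable_inv_cube_shift).mul_left _
  have hpoint : ∀ m : ℕ, 6 / π ^ 2 * (Real.log (m + 2) / ((m : ℝ) + 2) ^ 3)
      ≤ 6 / π ^ 2 * (1 / ((m : ℝ) + 2) ^ 2 - 1 / ((m : ℝ) + 2) ^ 3) := by
    intro m
    apply mul_le_mul_of_nonneg_left ?_ hC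
    have hx : (2:ℝ) ≤ (m:ℝ) + 2 := by have := Nat.cast_nonneg (α := ℝ) m; linarith
    have hlog : Real.log ((m:ℝ) + 2) ≤ (m:ℝ) + 2 - 1 :=
      Real.log_le_sub_one_of_pos (by linarith)
    have h1 : Real.log ((m:ℝ) + 2) / ((m:ℝ) + 2) ^ 3 ≤ ((m:ℝ) + 2 - 1) / ((m:ℝ) + 2) ^ 3 :=
      div_le_div_of_nonneg_right hlog (by positivity)
    have h2 : ((m:ℝ) + 2 - 1) / ((m:ℝ) + 2) ^ 3
        = 1 / ((m : ℝ) + 2) ^ 2 - 1 / ((m : ℝ) + 2) ^ 3 := by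
      field_simp
    linarith
  calc ∑' n, sFun n = ∑' m : ℕ, 6 / π ^ 2 * (Real.log (m + 2) / ((m : ℝ) + 2) ^ 3) := by
        rw [← iFun_inj.tsum_eq (Function.support_subset_iff'.2 sFun_supp)]
        exact tsum_congr fun m => by simpa using sFun_comp m
    _ ≤ ∑' m : ℕ, 6 / π ^ 2 * (1 / ((m : ℝ) + 2) ^ 2 - 1 / ((m : ℝ) + 2) ^ 3) :=
        Summable.tsum_le_tsum hpoint summable_sq_comp hrhs
    _ = 6 / π ^ 2 * ∑' m : ℕ, (1 / ((m : ℝ) + 2) ^ 2 - 1 / ((m : ℝ) + 2) ^ 3) := tsum_mul_left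
    _ = 6 / π ^ 2 * (∑' m : ℕ, 1 / ((m : ℝ) + 2) ^ 2 - ∑' m : ℕ, 1 / ((m : ℝ) + 2) ^ 3) := by
        rw [Summable.tsum_sub summable_inv_sq_shift summable_inv_cube_shift]
    _ ≤ 6 / π ^ 2 * (π ^ 2 / 6 - 1 - 3161105947/16003008000) := by
        apply mul_le_mul_of_nonneg_left ?_ hC
        rw [tsum_inv_sq_shift]
        linarith [S3_le_tsum]

lemma tsum_rFun_le : ∑' n, rFun n ≤ ∑ n ∈ Finset.range 15, rFun n := by
  have hneg : Summable (fun n => -rFun n) := summable_rFun.neg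
  have h := Summable.sum_le_tsum (Finset.range 15) (fun i _ => neg_nonneg.2 (rFun_nonpos i)) hneg
  rw [tsum_neg] at h
  have h2 : ∑ n ∈ Finset.range 15, -rFun n = -∑ n ∈ Finset.range 15, rFun n := by
    rw [Finset.sum_neg_distrib]
  linarith [h2 ▸ h]

lemma not_isSquare_of_checked (n : ℕ) (h : ∀ k ∈ Finset.range (n + 1), k * k ≠ n) :
    ¬ IsSquare n := by
  rintro ⟨k, rfl⟩
  have hk : k ≤ k * k := by nlinarith
  exact h k (Finset.mem_range.2 (by omega)) rfl

lemma rFun_sq_zero (n : ℕ) (h : IsSquare (n + 1)) : rFun n = 0 := by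
  rw [rFun, if_pos h]

lemma sum_rFun_eval : ∑ n ∈ Finset.range 15, rFun n =
    -(6 / π ^ 2) * (Real.log 2 / 4 + Real.log 3 / 9 + Real.log 5 / 25 + Real.log 6 / 36
      + Real.log 7 / 49 + Real.log 8 / 64 + Real.log 10 / 100 + Real.log 11 / 121
      + Real.log 12 / 144 + Real.log 13 / 169 + Real.log 14 / 196 + Real.log 15 / 225) := by
  simp only [Finset.sum_range_succ, Finset.sum_range_zero]
  rw [rFun_sq_zero 0 ⟨1, rfl⟩, rFun_sq_zero 3 ⟨2, rfl⟩, rFun_sq_zero 8 ⟨3, rfl⟩,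
    rFun_eval 1 (not_isSquare_of_checked 2 (by decide)), rFun_eval 2 (not_isSquare_of_checked 3 (by decide)), rFun_eval 4 (not_isSquare_of_checked 5 (by decide)),
    rFun_eval 5 (not_isSquare_of_checked 6 (by decide)), rFun_eval 6 (not_isSquare_of_checked 7 (by decide)), rFun_eval 7 (not_isSquare_of_checked 8 (by decide)),
    rFun_eval 9 (not_isSquare_of_checked 10 (by decide)), rFun_eval 10 (not_isSquare_of_checked 11 (by decide)), rFun_eval 11 (not_isSquare_of_checked 12 (by decide)),
    rFun_eval 12 (not_isSquare_of_checked 13 (by decide)), rFun_eval 13 (not_isSquare_of_checked 14 (by decide)), rFun_eval 14 (not_isSquare_of_checked 15 (by decide))]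
  norm_num
  ring

lemma tsum_g_neg :
    (∑' n : ℕ, pSeq (n + 1) * Real.log (aSeq (n + 1))) < 0 := by
  have g_eq : (fun n : ℕ => pSeq (n + 1) * Real.log (aSeq (n + 1)))
      = fun n => sFun n + rFun n := by
    funext n
    by_cases h : IsSquare (n + 1) <;> simp [sFun, rFun, h]
  rw [show (∑' n : ℕ, pSeq (n + 1) * Real.log (aSeq (n + 1)))
      = ∑' n : ℕ, (sFun n + rFun n) from by rw [← g_eq]]
  rw [Summable.tsum_add summable_sFun summable_rFun]
  have h1 := tsum_sFun_le
  have h2 := tsum_rFun_le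
  rw [sum_rFun_eval] at h2
  -- numeric bounds
  have hl2 := Real.log_two_gt_d9
  have b3 : ((3:ℕ):ℝ) * Real.log 2 ≤ ((2:ℕ):ℝ) * Real.log 3 :=
    log_ge_aux (by norm_num)
  have b5 : ((2:ℕ):ℝ) * Real.log 2 ≤ ((1:ℕ):ℝ) * Real.log 5 :=
    log_ge_aux (by norm_num)
  have b6 : ((5:ℕ):ℝ) * Real.log 2 ≤ ((2:ℕ):ℝ) * Real.log 6 :=
    log_ge_aux (by norm_num)
  have b7 : ((5:ℕ):ℝ) * Real.log 2 ≤ ((2:ℕ):ℝ) * Real.log 7 :=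
    log_ge_aux (by norm_num)
  have b8 : ((3:ℕ):ℝ) * Real.log 2 ≤ ((1:ℕ):ℝ) * Real.log 8 :=
    log_ge_aux (by norm_num)
  have b10 : ((3:ℕ):ℝ) * Real.log 2 ≤ ((1:ℕ):ℝ) * Real.log 10 :=
    log_ge_aux (by norm_num)
  have b11 : ((3:ℕ):ℝ) * Real.log 2 ≤ ((1:ℕ):ℝ) * Real.log 11 :=
    log_ge_aux (by norm_num)
  have b12 : ((7:ℕ):ℝ) * Real.log 2 ≤ ((2:ℕ):ℝ) * Real.log 12 :=
    log_ge_aux (by norm_num)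
  have b13 : ((7:ℕ):ℝ) * Real.log 2 ≤ ((2:ℕ):ℝ) * Real.log 13 :=
    log_ge_aux (by norm_num)
  have b14 : ((7:ℕ):ℝ) * Real.log 2 ≤ ((2:ℕ):ℝ) * Real.log 14 :=
    log_ge_aux (by norm_num)
  have b15 : ((7:ℕ):ℝ) * Real.log 2 ≤ ((2:ℕ):ℝ) * Real.log 15 :=
    log_ge_aux (by norm_num)
  push_cast at b3 b5 b6 b7 b8 b10 b11 b12 b13 b14 b15
  have hpi2 : π ^ 2 < 9.9225 := by nlinarith [Real.pi_gt_three, Real.pi_lt_d2]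
  have hC : (0:ℝ) < 6 / π ^ 2 := by positivity
  have key : (π ^ 2 / 6 - 1 - 3161105947/16003008000)
      - (Real.log 2 / 4 + Real.log 3 / 9 + Real.log 5 / 25 + Real.log 6 / 36
      + Real.log 7 / 49 + Real.log 8 / 64 + Real.log 10 / 100 + Real.log 11 / 121
      + Real.log 12 / 144 + Real.log 13 / 169 + Real.log 14 / 196 + Real.log 15 / 225) < 0 := by
    nlinarith [hl2, b3, b5, b6, b7, b8, b10, b11, b12, b13, b14, b15, hpi2]
  nlinarith [h1, h2, hC, key, mul_neg_of_pos_of_neg hC key]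

lemma not_summable_part (t : ℝ) (ht : 0 < t) :
    ¬ Summable (fun n : ℕ => pSeq (n + 1) * aSeq (n + 1) ^ t) := by
  intro hsum
  have h0 := hsum.tendsto_atTop_zero
  have hev : ∀ᶠ n in Filter.atTop, pSeq (n + 1) * aSeq (n + 1) ^ t < 1 :=
    h0.eventually_lt_const one_pos
  obtain ⟨N, hN⟩ := Filter.eventually_atTop.1 hev
  set m : ℕ := max 2 (max (Nat.ceil (5 / t)) N) with hm
  have hm2 : 2 ≤ m := le_max_left _ _
  have hmc : (5 / t : ℝ) ≤ (m : ℝ) := by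
    have h1 : Nat.ceil (5 / t) ≤ m := le_trans (le_max_left _ _) (le_max_right 2 _)
    exact le_trans (Nat.le_ceil _) (by exact_mod_cast h1)
  have hmN : N ≤ m := le_trans (le_max_right _ _) (le_max_right _ _)
  set n := m ^ 2 - 1 with hn
  have hpos : 1 ≤ m ^ 2 := Nat.one_le_pow _ _ (by omega)
  have hn1 : n + 1 = m ^ 2 := Nat.succ_pred_eq_of_pos hpos
  have hnN : N ≤ n := by
    have hsq : m ^ 2 = m * m := sq m
    have hmul : 2 * m ≤ m * m := Nat.mul_le_mul_right m hm2
    omega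
  have hlt := hN n hnN
  rw [hn1, aSeq_sq, pSeq] at hlt
  have hM : (2:ℝ) ≤ (m:ℝ) := by exact_mod_cast hm2
  have hM0 : (0:ℝ) < (m:ℝ) := by linarith
  have hmt : (5:ℝ) ≤ (m:ℝ) * t := by
    rw [div_le_iff₀ ht] at hmc; linarith
  have hrr : ((m:ℝ) ^ (m:ℝ)) ^ t = (m:ℝ) ^ ((m:ℝ) * t) :=
    (Real.rpow_mul hM0.le _ _).symm
  rw [hrr] at hlt
  have h5 : (m:ℝ) ^ (5:ℝ) ≤ (m:ℝ) ^ ((m:ℝ) * t) :=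
    Real.rpow_le_rpow_of_exponent_le (by linarith) hmt
  have h5' : (m:ℝ) ^ (5:ℝ) = (m:ℝ) ^ (5:ℕ) := by
    rw [← Real.rpow_natCast (m:ℝ) 5]; norm_num
  rw [h5'] at h5
  have hcast : ((m ^ 2 : ℕ) : ℝ) = (m:ℝ) ^ 2 := by push_cast; ring
  rw [hcast] at hlt
  rw [div_mul_eq_mul_div, div_lt_one (by positivity)] at hlt
  have hpi2 : π ^ 2 < 12 := by nlinarith [Real.pi_lt_d2, Real.pi_pos]
  have hM4 : (0:ℝ) < (m:ℝ) ^ 4 := by positivity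
  nlinarith [hlt, h5, hpi2, hM4, hM]

/-- For `pₙ = (6/π²)n^{−2}` and `aₙ = 1/n` off squares, `aₙ = (√n)^{√n}` on squares, the measure
`μ = Σₙ pₙ δ_{fₙ}` (with `ρ(fₙ) = aₙ`) satisfies `χ_μ = Σₙ pₙ log aₙ ∈ (−∞, 0)`, i.e. the series
converges and has negative sum, while `Σₙ pₙ aₙ^t = ∞` for every `t > 0`. -/
theorem pathological_contraction_example :
    (Summable fun n : ℕ => pSeq (n + 1) * Real.log (aSeq (n + 1))) ∧
    (∑' n : ℕ, pSeq (n + 1) * Real.log (aSeq (n + 1))) < 0 ∧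
    (∀ t : ℝ, 0 < t → ¬ Summable fun n : ℕ => pSeq (n + 1) * aSeq (n + 1) ^ t) := by
  refine ⟨?_, tsum_g_neg, fun t ht => not_summable_part t ht⟩
  have g_eq : (fun n : ℕ => pSeq (n + 1) * Real.log (aSeq (n + 1)))
      = fun n => sFun n + rFun n := by
    funext n
    by_cases h : IsSquare (n + 1) <;> simp [sFun, rFun, h]
  rw [g_eq]
  exact summable_sFun.add summable_rFun
end

section
/- Let μ be a finitely supported probability measure on similarities of ℝ^d without a common fixed point, with χ_μ < 0, and with some g₀ ∈ supp(μ) having ρ(g₀) > 1. Let ν be the unique μ-stationary measure. Then there is α₁ = α₁(μ) > 0 such that for every x ∈ ℝ^d, ν(B_R(x)ᶜ) ≫_{μ,x} R^{−α₁} for all R ≥ 1. In particular, one can take α₁ = −log p₀ / log ρ₀ where p₀ = μ({g₀}) and ρ₀ = ρ(g₀). -/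
open MeasureTheory Metric Real

/-- Polynomial lower bound for tails of self-similar measures. Let `μ = Σᵢ pᵢ δ_{gᵢ}` be a
finitely supported probability measure on similarities `gᵢ(x) = rᵢ·Uᵢx + bᵢ` of `ℝ^d` without a
common fixed point, with contraction rate `χ_μ = Σᵢ pᵢ log rᵢ < 0`, and suppose some `g_{i₀}` in
the support has ratio `r_{i₀} > 1`. Let `ν` be the unique `μ`-stationary (self-similar) measure.
Then with `α₁ = −log p_{i₀} / log r_{i₀} > 0`, for every `x ∈ ℝ^d` one has
`ν(B_R(x)ᶜ) ≫_{μ,x} R^{−α₁}` for all `R ≥ 1`. -/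
theorem selfSimilar_polynomial_lower_bound
    {d : ℕ} {k : ℕ}
    (r : Fin k → ℝ) (hr : ∀ i, 0 < r i)
    (U : Fin k → (EuclideanSpace ℝ (Fin d) ≃ₗᵢ[ℝ] EuclideanSpace ℝ (Fin d)))
    (b : Fin k → EuclideanSpace ℝ (Fin d))
    (g : Fin k → EuclideanSpace ℝ (Fin d) → EuclideanSpace ℝ (Fin d))
    (hg : ∀ i x, g i x = r i • U i x + b i)
    (p : Fin k → ℝ) (hp : ∀ i, 0 < p i) (hpsum : ∑ i, p i = 1)
    (hnofix : ¬ ∃ x : EuclideanSpace ℝ (Fin d), ∀ i, g i x = x)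
    (hchi : ∑ i, p i * Real.log (r i) < 0)
    (i₀ : Fin k) (hi₀ : 1 < r i₀)
    (ν : Measure (EuclideanSpace ℝ (Fin d))) [IsProbabilityMeasure ν]
    (hν : ∀ f : BoundedContinuousFunction (EuclideanSpace ℝ (Fin d)) ℝ,
      ∑ i, p i * ∫ x, f (g i x) ∂ν = ∫ x, f x ∂ν) :
    0 < -Real.log (p i₀) / Real.log (r i₀) ∧
    ∀ x : EuclideanSpace ℝ (Fin d), ∃ c > (0 : ℝ), ∀ R ≥ (1 : ℝ),
      c * R ^ (-(-Real.log (p i₀) / Real.log (r i₀)))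
        ≤ (ν (ball x R)ᶜ).toReal := by
  set ρ := r i₀ with hρdef
  set p₀ := p i₀ with hp₀def
  have hρ1 : (1:ℝ) < ρ := hi₀
  have hρ0 : (0:ℝ) < ρ := lt_trans one_pos hρ1
  have hlogρ : 0 < Real.log ρ := Real.log_pos hρ1
  have hp₀0 : 0 < p₀ := hp i₀
  have hp₀1 : p₀ < 1 := by
    by_contra h
    push_neg at h
    have h1 : ∑ i, p i ≤ p i₀ := by rw [hpsum]; exact h
    have haddsum := Finset.add_sum_erase Finset.univ p (Finset.mem_univ i₀)
    have h2 : ∑ i ∈ Finset.univ.erase i₀, p i ≤ 0 := by linarith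
    have h3 : ∀ j ∈ Finset.univ.erase i₀, (0:ℝ) ≤ p j := fun j _ => (hp j).le
    have h5 : ∀ j : Fin k, j = i₀ := by
      intro j
      by_contra hj
      have hjm : j ∈ Finset.univ.erase i₀ := Finset.mem_erase.2 ⟨hj, Finset.mem_univ j⟩
      have hle : p j ≤ ∑ i ∈ Finset.univ.erase i₀, p i := Finset.single_le_sum h3 hjm
      linarith [hp j]
    have h6 : ∑ i, p i * Real.log (r i) = p i₀ * Real.log (r i₀) := by
      rw [← Finset.add_sum_erase Finset.univ (fun i => p i * Real.log (r i))
        (Finset.mem_univ i₀)]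
      have hz : ∀ j ∈ Finset.univ.erase i₀, p j * Real.log (r j) = 0 := by
        intro j hj
        exact absurd (Finset.mem_erase.1 hj).1 (not_not.2 (h5 j))
      rw [Finset.sum_eq_zero hz]; ring
    rw [h6] at hchi
    nlinarith [Real.log_pos hi₀, hp i₀]
  have hlogp₀ : Real.log p₀ < 0 := Real.log_neg hp₀0 hp₀1
  set α : ℝ := -Real.log p₀ / Real.log ρ with hαdef
  have hα : 0 < α := div_pos (neg_pos.2 hlogp₀) hlogρ
  refine ⟨hα, ?_⟩
  -- continuity and measurability of the g i
  have hgc : ∀ i, Continuous (g i) := by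
    intro i
    have hfun : g i = fun x => r i • U i x + b i := funext (hg i)
    rw [hfun]
    exact ((continuous_const_smul (r i)).comp (U i).continuous).add continuous_const
  have hgm : ∀ i, Measurable (g i) := fun i => (hgc i).measurable
  -- distances scale
  have hdist : ∀ i y z, dist (g i y) (g i z) = r i * dist y z := by
    intro i y z
    rw [hg, hg, dist_eq_norm, dist_eq_norm]
    have hsub : r i • U i y + b i - (r i • U i z + b i) = r i • U i (y - z) := by
      rw [map_sub, smul_sub]; abel
    rw [hsub, norm_smul, (U i).norm_map, Real.norm_eq_abs, abs_of_pos (hr i)]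
  -- the stationarity identity at the level of measures
  have hmap : ν = ∑ i, (ENNReal.ofReal (p i)) • ν.map (g i) := by
    have hfin : ∀ i, IsProbabilityMeasure (ν.map (g i)) := fun i =>
      Measure.isProbabilityMeasure_map (hgm i).aemeasurable
    have hfinsum : IsFiniteMeasure (∑ i, (ENNReal.ofReal (p i)) • ν.map (g i)) := by
      constructor
      rw [Measure.finset_sum_apply]
      refine ENNReal.sum_lt_top.2 fun i _ => ?_
      have := hfin i
      rw [Measure.smul_apply, smul_eq_mul, measure_univ, mul_one]
      exact ENNReal.ofReal_lt_top
    symm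
    apply ext_of_forall_lintegral_eq_of_IsFiniteMeasure
    intro f
    have hlip : LipschitzWith 1 (fun x : NNReal => (x : ℝ)) := by
      refine LipschitzWith.of_dist_le_mul fun a c => ?_
      rw [NNReal.dist_eq, Real.dist_eq]
      simp
    set fR : BoundedContinuousFunction (EuclideanSpace ℝ (Fin d)) ℝ :=
      BoundedContinuousFunction.comp (fun x : NNReal => (x : ℝ)) hlip f with hfR
    have hfR_nonneg : ∀ x, 0 ≤ fR x := fun x => (f x).coe_nonneg
    have key := hν fR
    rw [lintegral_finset_sum_measure]
    have hmeasf : Measurable fun x => (f x : ENNReal) :=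
      (ENNReal.continuous_coe.comp f.continuous).measurable
    have hterm : ∀ i, ∫⁻ x, (f x : ENNReal) ∂((ENNReal.ofReal (p i)) • ν.map (g i))
        = ENNReal.ofReal (p i * ∫ x, fR (g i x) ∂ν) := by
      intro i
      rw [lintegral_smul_measure, lintegral_map hmeasf (hgm i)]
      have hco : ∫⁻ x, (f (g i x) : ENNReal) ∂ν
          = ENNReal.ofReal (∫ x, fR (g i x) ∂ν) :=
        lintegral_coe_eq_integral (fun x => f (g i x))
          ((fR.compContinuous ⟨g i, hgc i⟩).integrable ν)
      rw [hco, smul_eq_mul, ← ENNReal.ofReal_mul (hp i).le]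
    calc ∑ i, ∫⁻ x, (f x : ENNReal) ∂((ENNReal.ofReal (p i)) • ν.map (g i))
        = ∑ i, ENNReal.ofReal (p i * ∫ x, fR (g i x) ∂ν) :=
          Finset.sum_congr rfl fun i _ => hterm i
      _ = ENNReal.ofReal (∑ i, p i * ∫ x, fR (g i x) ∂ν) := by
          rw [ENNReal.ofReal_sum_of_nonneg]
          intro i _
          exact mul_nonneg (hp i).le (integral_nonneg fun x => hfR_nonneg _)
      _ = ENNReal.ofReal (∫ x, fR x ∂ν) := by rw [key]
      _ = ∫⁻ x, (f x : ENNReal) ∂ν :=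
          (lintegral_coe_eq_integral (fun x => f x) (fR.integrable ν)).symm
  -- consequence: measure of a set
  have happly : ∀ (S : Set (EuclideanSpace ℝ (Fin d))), MeasurableSet S →
      ν S = ∑ i, ENNReal.ofReal (p i) * ν ((g i) ⁻¹' S) := by
    intro S hS
    conv_lhs => rw [hmap]
    rw [Measure.finset_sum_apply]
    refine Finset.sum_congr rfl fun i _ => ?_
    rw [Measure.smul_apply, Measure.map_apply (hgm i) hS, smul_eq_mul]
  -- fixed point of g i₀
  obtain ⟨x₀, hx₀⟩ : ∃ x₀ : EuclideanSpace ℝ (Fin d), g i₀ x₀ = x₀ := by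
    set L : EuclideanSpace ℝ (Fin d) →ₗ[ℝ] EuclideanSpace ℝ (Fin d) :=
      LinearMap.id - ρ • (U i₀).toLinearEquiv.toLinearMap with hL
    have hLapp : ∀ m, L m = m - ρ • U i₀ m := fun m => rfl
    have hLinj : Function.Injective L := by
      rw [← LinearMap.ker_eq_bot, LinearMap.ker_eq_bot']
      intro m hm
      rw [hLapp] at hm
      have hmeq : m = ρ • U i₀ m := by rwa [sub_eq_zero] at hm
      have hnorm : ‖m‖ = ρ * ‖m‖ := by
        calc ‖m‖ = ‖ρ • U i₀ m‖ := by rw [← hmeq]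
          _ = ρ * ‖m‖ := by
            rw [norm_smul, (U i₀).norm_map, Real.norm_eq_abs, abs_of_pos hρ0]
      by_contra hm0
      have hne : ‖m‖ ≠ 0 := fun h => hm0 (norm_eq_zero.1 h)
      have hpos : 0 < ‖m‖ := lt_of_le_of_ne (norm_nonneg m) (Ne.symm hne)
      nlinarith
    have hLsurj : Function.Surjective L := LinearMap.injective_iff_surjective.1 hLinj
    obtain ⟨x₀, hx₀⟩ := hLsurj (b i₀)
    rw [hLapp] at hx₀
    refine ⟨x₀, ?_⟩
    rw [hg]
    rw [← hx₀]; abel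
  -- there is s ∈ (0,1] with ν((ball x₀ s)ᶜ) > 0
  obtain ⟨s, hs0, hs1, hεpos⟩ :
      ∃ s : ℝ, 0 < s ∧ s ≤ 1 ∧ 0 < ν (ball x₀ s)ᶜ := by
    by_contra h
    push_neg at h
    have hzero : ∀ s : ℝ, 0 < s → s ≤ 1 → ν (ball x₀ s)ᶜ = 0 := by
      intro s h1 h2
      exact le_antisymm (h s h1 h2) zero_le
    have hcompl : ν ({x₀}ᶜ) = 0 := by
      have hsub : ({x₀}ᶜ : Set (EuclideanSpace ℝ (Fin d)))
          ⊆ ⋃ n : ℕ, (ball x₀ (1/(n+1)))ᶜ := by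
        intro y hy
        have hd : 0 < dist y x₀ := dist_pos.2 hy
        obtain ⟨n, hn⟩ := exists_nat_one_div_lt hd
        exact Set.mem_iUnion.2 ⟨n, fun hmem => absurd (mem_ball.1 hmem) (not_lt.2 hn.le)⟩
      refine measure_mono_null hsub (measure_iUnion_null fun n => ?_)
      refine hzero (1/(n+1)) (by positivity) ?_
      rw [div_le_one (by positivity)]
      linarith [Nat.cast_nonneg (α := ℝ) n]
    have hpoint : ν {x₀} = 1 := by
      have hsum := measure_add_measure_compl (μ := ν) (s := {x₀})
        (measurableSet_singleton x₀)
      rw [hcompl, add_zero] at hsum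
      rw [hsum]; exact measure_univ
    have hid := happly {x₀} (measurableSet_singleton x₀)
    rw [hpoint] at hid
    set q : Fin k → ℝ := fun i => (ν ((g i) ⁻¹' {x₀})).toReal with hq
    have hqle : ∀ i, q i ≤ 1 := by
      intro i
      have hle := prob_le_one (μ := ν) (s := (g i) ⁻¹' {x₀})
      calc q i ≤ (1 : ENNReal).toReal := ENNReal.toReal_mono ENNReal.one_ne_top hle
        _ = 1 := by simp
    have hq_eq : ∑ i, p i * q i = 1 := by
      have h1 : (∑ i, ENNReal.ofReal (p i) * ν ((g i) ⁻¹' {x₀})).toReal = 1 := by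
        rw [← hid]; simp
      rw [ENNReal.toReal_sum
        (fun i _ => ENNReal.mul_ne_top ENNReal.ofReal_ne_top (measure_ne_top ν _))] at h1
      rw [← h1]
      refine Finset.sum_congr rfl fun i _ => ?_
      rw [ENNReal.toReal_mul, ENNReal.toReal_ofReal (hp i).le]
    have hqone : ∀ i, q i = 1 := by
      have hle : ∀ i ∈ Finset.univ, p i * q i ≤ p i := fun i _ => by
        nlinarith [hqle i, (hp i).le]
      have hsum_eq : ∑ i, p i * q i = ∑ i, p i := by rw [hq_eq, hpsum]
      have hall := (Finset.sum_eq_sum_iff_of_le hle).1 hsum_eq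
      intro i
      have h := hall i (Finset.mem_univ i)
      have := hp i
      nlinarith
    refine hnofix ⟨x₀, fun i => ?_⟩
    by_contra hgi
    have hone : ν ((g i) ⁻¹' {x₀}) = 1 := by
      have hq1 := hqone i
      rw [hq] at hq1
      simp only [] at hq1
      rw [← ENNReal.toReal_one] at hq1
      exact (ENNReal.toReal_eq_toReal_iff' (measure_ne_top ν _) ENNReal.one_ne_top).1 hq1
    have hn0 : ν ((g i) ⁻¹' {x₀})ᶜ = 0 := by
      rw [prob_compl_eq_zero_iff ((hgm i) (measurableSet_singleton x₀))]
      exact hone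
    have hsubs : ({x₀} : Set (EuclideanSpace ℝ (Fin d))) ⊆ ((g i) ⁻¹' {x₀})ᶜ := by
      intro y hy
      rw [Set.mem_singleton_iff] at hy
      subst hy
      exact fun hmem => hgi hmem
    have hcontr : ν {x₀} ≤ 0 := hn0 ▸ measure_mono hsubs
    rw [hpoint] at hcontr
    exact absurd hcontr (by simp)
  set ε : ℝ := (ν (ball x₀ s)ᶜ).toReal with hε
  have hεR : 0 < ε := ENNReal.toReal_pos hεpos.ne' (measure_ne_top ν _)
  -- key recursion
  have hrec : ∀ n : ℕ, p₀ ^ n * ε ≤ (ν (ball x₀ (ρ ^ n * s))ᶜ).toReal := by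
    intro n
    induction n with
    | zero => simp [hε]
    | succ n ih =>
      have hmeas : MeasurableSet ((ball x₀ (ρ ^ (n+1) * s))ᶜ
          : Set (EuclideanSpace ℝ (Fin d))) := measurableSet_ball.compl
      have hpre : (g i₀) ⁻¹' ((ball x₀ (ρ ^ (n+1) * s))ᶜ) = (ball x₀ (ρ ^ n * s))ᶜ := by
        ext y
        simp only [Set.mem_preimage, Set.mem_compl_iff, mem_ball, not_lt]
        have hdy : dist (g i₀ y) x₀ = ρ * dist y x₀ := by
          conv_lhs => rw [← hx₀]
          exact hdist i₀ y x₀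
        rw [hdy]
        constructor
        · intro hyp
          have hyp2 : ρ * (ρ ^ n * s) ≤ ρ * dist y x₀ := by
            calc ρ * (ρ ^ n * s) = ρ ^ (n+1) * s := by ring
              _ ≤ ρ * dist y x₀ := hyp
          exact le_of_mul_le_mul_left hyp2 hρ0
        · intro hyp
          calc ρ ^ (n+1) * s = ρ * (ρ ^ n * s) := by ring
            _ ≤ ρ * dist y x₀ := by nlinarith
      have hlow : ENNReal.ofReal p₀ * ν ((ball x₀ (ρ ^ n * s))ᶜ)
          ≤ ν ((ball x₀ (ρ ^ (n+1) * s))ᶜ) := by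
        rw [happly _ hmeas]
        have hsingle := Finset.single_le_sum
          (f := fun i => ENNReal.ofReal (p i) * ν ((g i) ⁻¹' ((ball x₀ (ρ ^ (n+1) * s))ᶜ)))
          (fun i _ => zero_le) (Finset.mem_univ i₀)
        simp only [hpre] at hsingle
        exact hsingle
      have h1 : (ENNReal.ofReal p₀ * ν ((ball x₀ (ρ ^ n * s))ᶜ)).toReal
          ≤ (ν ((ball x₀ (ρ ^ (n+1) * s))ᶜ)).toReal :=
        ENNReal.toReal_mono (measure_ne_top ν _) hlow
      rw [ENNReal.toReal_mul, ENNReal.toReal_ofReal hp₀0.le] at h1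
      calc p₀ ^ (n+1) * ε = p₀ * (p₀ ^ n * ε) := by ring
        _ ≤ p₀ * (ν ((ball x₀ (ρ ^ n * s))ᶜ)).toReal := by nlinarith
        _ ≤ _ := h1
  -- conclusion
  intro x
  set D := dist x x₀ with hD
  have hD0 : 0 ≤ D := dist_nonneg
  have h1D : (0:ℝ) < 1 + D := by linarith
  refine ⟨ε * p₀ * s ^ α * (1 + D) ^ (-α), by positivity, ?_⟩
  intro R hR
  have hR0 : (0:ℝ) < R := lt_of_lt_of_le one_pos hR
  set t : ℝ := Real.logb ρ ((R + D) / s) with ht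
  have hRD0' : (0:ℝ) < R + D := by linarith
  have hRDs : (1:ℝ) ≤ (R + D) / s := by
    rw [le_div_iff₀ hs0]; nlinarith
  have hRD0 : (0:ℝ) < (R + D) / s := by positivity
  have ht0 : 0 ≤ t := Real.logb_nonneg hρ1 hRDs
  set n : ℕ := ⌈t⌉₊ with hn
  have hnt : t ≤ (n : ℝ) := Nat.le_ceil t
  have hnt1 : (n : ℝ) ≤ t + 1 := by
    have := Nat.ceil_lt_add_one ht0
    linarith
  have hρn : (0:ℝ) < ρ ^ n := pow_pos hρ0 n
  have he1 : (R + D) / s = ρ ^ t := (Real.rpow_logb hρ0 (ne_of_gt hρ1) hRD0).symm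
  have hradius : R + D ≤ ρ ^ n * s := by
    have h2 : ρ ^ t ≤ ρ ^ (n:ℝ) := Real.rpow_le_rpow_of_exponent_le hρ1.le hnt
    rw [Real.rpow_natCast] at h2
    have h3 : (R + D)/s ≤ ρ ^ n := le_trans (le_of_eq he1) h2
    exact (div_le_iff₀ hs0).1 h3
  have hpρ : p₀ = ρ ^ (-α) := by
    have hna : -α = Real.log p₀ / Real.log ρ := by rw [hαdef]; ring
    rw [hna, Real.rpow_def_of_pos hρ0, mul_comm,
      div_mul_cancel₀ _ (ne_of_gt hlogρ), Real.exp_log hp₀0]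
  have h3 : p₀ ^ t = ((R + D)/s) ^ (-α) := by
    rw [hpρ, he1, ← Real.rpow_mul hρ0.le, ← Real.rpow_mul hρ0.le, mul_comm]
  have hsα : ((R + D)/s) ^ (-α) = s ^ α * (R + D) ^ (-α) := by
    rw [Real.div_rpow hRD0'.le hs0.le, Real.rpow_neg hs0.le, div_eq_mul_inv, inv_inv, mul_comm]
  have hfinal1 : p₀ * (s ^ α * (R + D) ^ (-α)) ≤ p₀ ^ n := by
    have h2 : p₀ ^ (t+1) = p₀ * (s ^ α * (R+D) ^ (-α)) := by
      rw [Real.rpow_add hp₀0, Real.rpow_one, h3, hsα]; ring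
    rw [← Real.rpow_natCast p₀ n, ← h2]
    exact Real.rpow_le_rpow_of_exponent_ge hp₀0 hp₀1.le hnt1
  have hsubset : ball x R ⊆ ball x₀ (ρ ^ n * s) := by
    intro y hy
    rw [mem_ball] at hy ⊢
    calc dist y x₀ ≤ dist y x + dist x x₀ := dist_triangle _ _ _
      _ < R + D := by rw [← hD]; linarith
      _ ≤ ρ ^ n * s := hradius
  have hmono : (ν (ball x₀ (ρ ^ n * s))ᶜ).toReal ≤ (ν (ball x R)ᶜ).toReal :=
    ENNReal.toReal_mono (measure_ne_top ν _)
      (measure_mono (Set.compl_subset_compl.2 hsubset))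
  have hRD_bound : (1 + D) ^ (-α) * R ^ (-α) ≤ (R + D) ^ (-α) := by
    have h1 : R + D ≤ (1 + D) * R := by
      have h0 : D * 1 ≤ D * R := mul_le_mul_of_nonneg_left hR hD0
      calc R + D = R + D * 1 := by ring
        _ ≤ R + D * R := by linarith
        _ = (1 + D) * R := by ring
    have h2 : ((1 + D) * R) ^ (-α) ≤ (R + D) ^ (-α) :=
      Real.rpow_le_rpow_of_nonpos hRD0' h1 (neg_nonpos.2 hα.le)
    rw [Real.mul_rpow h1D.le hR0.le] at h2
    exact h2
  have hc0 : 0 ≤ ε * p₀ * s ^ α := by positivity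
  calc ε * p₀ * s ^ α * (1 + D) ^ (-α) * R ^ (-α)
      = (ε * p₀ * s ^ α) * ((1 + D) ^ (-α) * R ^ (-α)) := by ring
    _ ≤ (ε * p₀ * s ^ α) * (R + D) ^ (-α) := mul_le_mul_of_nonneg_left hRD_bound hc0
    _ = ε * (p₀ * (s ^ α * (R + D) ^ (-α))) := by ring
    _ ≤ ε * p₀ ^ n := mul_le_mul_of_nonneg_left hfinal1 hεR.le
    _ = p₀ ^ n * ε := by ring
    _ ≤ (ν (ball x₀ (ρ ^ n * s))ᶜ).toReal := hrec n
    _ ≤ (ν (ball x R)ᶜ).toReal := hmono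
end
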